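/- Let n ≥ 3, λ > 1, ν < −1, and define w₀(r) = r^{−n} · (log(1/r))^{−(ν+λ)/(λ−1)} for r ∈ (0,1). Define w₁(r) = (1/(n−2)) · ∫_r^1 ((ζ/r)^{n−2} − 1) · ζ · w₀(ζ) dζ. Then there exist constants c₁, c₂ > 0 and r₀ ∈ (0,1) such that c₁ · r^{2−n} · (log(1/r))^{−(1+ν)/(λ−1)} ≤ w₁(r) ≤ c₂ · r^{2−n} · (log(1/r))^{−(1+ν)/(λ−1)} for all r ∈ (0, r₀). -/

import Mathlib

open Real MeasureTheory Set intervalIntegral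

lemma my_aux_integrable {a β : ℝ} (ha : 0 < a) (ha1 : a < 1) (hβ : -1 < β)
    (g : ℝ → ℝ) (hg : ContinuousOn g (Icc a 1)) :
    IntervalIntegrable (fun ζ => g ζ * (-Real.log ζ) ^ β) volume a 1 := by
  obtain ⟨C, hC⟩ := isCompact_Icc.exists_bound_of_continuousOn hg
  rw [intervalIntegrable_iff_integrableOn_Ioc_of_le ha1.le,
    integrableOn_Ioc_iff_integrableOn_Ioo]
  have hmaj : IntegrableOn (fun ζ => C * ((1 - ζ) ^ β + (-Real.log a) ^ β)) (Ioo a 1) volume := by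
    have h1 : IntervalIntegrable (fun ζ : ℝ => (1 - ζ) ^ β) volume a 1 := by
      have h0 := (intervalIntegral.intervalIntegrable_rpow' (a := 1 - 1) (b := 1 - a) hβ)
      simpa using (h0.comp_sub_left 1).symm
    have h2 : IntervalIntegrable (fun ζ : ℝ => C * ((1 - ζ) ^ β + (-Real.log a) ^ β)) volume a 1 :=
      (h1.add intervalIntegrable_const).const_mul C
    exact ((intervalIntegrable_iff_integrableOn_Ioc_of_le ha1.le).1 h2).mono_set
      Ioo_subset_Ioc_self
  refine Integrable.mono' hmaj ?_ ?_
  · refine ContinuousOn.aestronglyMeasurable ?_ measurableSet_Ioo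
    refine ContinuousOn.mul (hg.mono fun x hx => ⟨hx.1.le, hx.2.le⟩) ?_
    refine ContinuousOn.rpow_const ?_ ?_
    · exact (Real.continuousOn_log.mono fun x hx =>
        (ne_of_gt (ha.trans hx.1) : x ≠ 0)).neg
    · intro x hx
      exact Or.inl (ne_of_gt (neg_pos.2 (Real.log_neg (ha.trans hx.1) hx.2)))
  · filter_upwards [ae_restrict_mem measurableSet_Ioo] with ζ hζ
    have hζ0 : 0 < ζ := ha.trans hζ.1
    have hL : 0 < -Real.log ζ := neg_pos.2 (Real.log_neg hζ0 hζ.2)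
    have hCg : |g ζ| ≤ C := by
      have := hC ζ ⟨hζ.1.le, hζ.2.le⟩
      simpa [Real.norm_eq_abs] using this
    have hLb : (-Real.log ζ) ^ β ≤ (1 - ζ) ^ β + (-Real.log a) ^ β := by
      rcases le_or_gt 0 β with hb | hb
      · have hmono : -Real.log ζ ≤ -Real.log a := by
          have h' : Real.log a ≤ Real.log ζ := Real.log_le_log ha hζ.1.le
          linarith
        have := Real.rpow_le_rpow hL.le hmono hb
        have hpos : (0:ℝ) ≤ (1 - ζ) ^ β := Real.rpow_nonneg (by linarith [hζ.2]) _
        linarith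
      · have h1ζ : 0 < 1 - ζ := by linarith [hζ.2]
        have hle : 1 - ζ ≤ -Real.log ζ := by
          have := Real.log_le_sub_one_of_pos hζ0
          linarith
        have := Real.rpow_le_rpow_of_nonpos h1ζ hle hb.le
        have hpos : (0:ℝ) ≤ (-Real.log a) ^ β :=
          Real.rpow_nonneg (neg_nonneg.2 (Real.log_nonpos ha.le ha1.le)) _
        linarith
    have hnorm : ‖g ζ * (-Real.log ζ) ^ β‖ = |g ζ| * (-Real.log ζ) ^ β := by
      rw [Real.norm_eq_abs, abs_mul, abs_of_nonneg (Real.rpow_nonneg hL.le _)]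
    rw [hnorm]
    have hC0 : 0 ≤ C := le_trans (abs_nonneg _) hCg
    calc |g ζ| * (-Real.log ζ) ^ β ≤ C * ((1 - ζ) ^ β + (-Real.log a) ^ β) :=
      mul_le_mul hCg hLb (Real.rpow_nonneg hL.le _) hC0

lemma my_aux_integral {a b : ℝ} (ha : 0 < a) (ha1 : a < 1) (hb : 0 < b) :
    ∫ ζ in a..1, ζ⁻¹ * (-Real.log ζ) ^ (b - 1) = (-Real.log a) ^ b / b := by
  have hint : IntervalIntegrable (fun ζ => ζ⁻¹ * (-Real.log ζ) ^ (b - 1)) volume a 1 :=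
    my_aux_integrable ha ha1 (by linarith) _
      (continuousOn_inv₀.mono fun x hx => (ne_of_gt (ha.trans_le hx.1) : x ≠ 0))
  have hFc : ContinuousOn (fun ζ : ℝ => -((-Real.log ζ) ^ b / b)) (Icc a 1) := by
    intro x hx
    have hx0 : 0 < x := ha.trans_le hx.1
    have h0 : ContinuousAt (fun ζ : ℝ => -Real.log ζ) x := (Real.continuousAt_log hx0.ne').neg
    have h1 : ContinuousAt (fun y : ℝ => y ^ b) (-Real.log x) :=
      Real.continuousAt_rpow_const _ _ (Or.inr hb.le)
    have h01 : ContinuousAt (fun ζ : ℝ => (-Real.log ζ) ^ b) x :=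
      ContinuousAt.comp (g := fun y : ℝ => y ^ b) (x := x) h1 h0
    exact ((h01.div_const b).neg).continuousWithinAt
  have hF : ∀ x ∈ Ioo a 1, HasDerivWithinAt (fun ζ : ℝ => -((-Real.log ζ) ^ b / b))
      (x⁻¹ * (-Real.log x) ^ (b - 1)) (Ioi x) x := by
    intro x hx
    have hx0 : 0 < x := ha.trans hx.1
    have hlog : Real.log x < 0 := Real.log_neg hx0 hx.2
    have h1 : HasDerivAt (fun ζ : ℝ => -Real.log ζ) (-x⁻¹) x := (Real.hasDerivAt_log hx0.ne').neg
    have h2 := h1.rpow_const (p := b) (Or.inl (ne_of_gt (neg_pos.2 hlog)))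
    have h3 := (h2.div_const b).neg
    have : -(-x⁻¹ * b * (-Real.log x) ^ (b - 1) / b) = x⁻¹ * (-Real.log x) ^ (b - 1) := by
      field_simp
    rw [this] at h3
    exact h3.hasDerivWithinAt
  rw [intervalIntegral.integral_eq_sub_of_hasDeriv_right_of_le ha1.le hFc hF hint]
  simp [Real.log_one, Real.zero_rpow hb.ne', neg_div]

theorem w1_asymptotics (n : ℕ) (hn : 3 ≤ n) (lam ν : ℝ) (hlam : 1 < lam) (hν : ν < -1) :
    ∃ c₁ > (0 : ℝ), ∃ c₂ > (0 : ℝ), ∃ r₀ ∈ Set.Ioo (0 : ℝ) 1,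
      ∀ r ∈ Set.Ioo (0 : ℝ) r₀,
        c₁ * r ^ (2 - (n : ℝ)) * (Real.log (1 / r)) ^ (-(1 + ν) / (lam - 1)) ≤
          (1 / ((n : ℝ) - 2)) * ∫ ζ in r..1, ((ζ / r) ^ ((n : ℝ) - 2) - 1) * ζ *
            (ζ ^ (-(n : ℝ)) * (Real.log (1 / ζ)) ^ (-(ν + lam) / (lam - 1))) ∧
        (1 / ((n : ℝ) - 2)) * ∫ ζ in r..1, ((ζ / r) ^ ((n : ℝ) - 2) - 1) * ζ *
            (ζ ^ (-(n : ℝ)) * (Real.log (1 / ζ)) ^ (-(ν + lam) / (lam - 1))) ≤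
          c₂ * r ^ (2 - (n : ℝ)) * (Real.log (1 / r)) ^ (-(1 + ν) / (lam - 1)) := by
  have hlam1 : 0 < lam - 1 := by linarith
  set b : ℝ := -(1 + ν) / (lam - 1) with hbdef
  have hb : 0 < b := div_pos (by linarith) hlam1
  have hexp : -(ν + lam) / (lam - 1) = b - 1 := by
    rw [hbdef]; field_simp; ring
  have hn3 : (3:ℝ) ≤ (n:ℝ) := by exact_mod_cast hn
  set N : ℝ := (n:ℝ) - 2 with hNdef
  have hN1 : (1:ℝ) ≤ N := by rw [hNdef]; linarith
  have hN0 : 0 < N := by linarith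
  have h2b : (0:ℝ) < (2:ℝ) ^ b := Real.rpow_pos_of_pos (by norm_num) b
  refine ⟨1 / (2 * N * b * (2:ℝ) ^ b), by positivity, 1 / (N * b), by positivity,
    1/4, ⟨by norm_num, by norm_num⟩, ?_⟩
  rintro r ⟨hr0, hr4⟩
  have hr1 : r < 1 := by linarith
  have hL : 0 < -Real.log r := neg_pos.2 (Real.log_neg hr0 hr1)
  have h2n : (2:ℝ) - (n:ℝ) = -N := by rw [hNdef]; ring
  simp only [one_div, Real.log_inv, hexp, h2n]
  -- rearranged integrand
  have hf_eq : (fun ζ : ℝ => ((ζ / r) ^ N - 1) * ζ * (ζ ^ (-(n:ℝ)) * (-Real.log ζ) ^ (b - 1)))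
      = fun ζ : ℝ => (((ζ / r) ^ N - 1) * ζ * ζ ^ (-(n:ℝ))) * (-Real.log ζ) ^ (b - 1) := by
    funext ζ; ring
  rw [hf_eq]
  set G : ℝ → ℝ := fun ζ : ℝ => (((ζ / r) ^ N - 1) * ζ * ζ ^ (-(n:ℝ))) * (-Real.log ζ) ^ (b - 1)
    with hGdef
  -- continuity of the non-log part
  have hcont : ∀ a : ℝ, 0 < a →
      ContinuousOn (fun ζ : ℝ => ((ζ / r) ^ N - 1) * ζ * ζ ^ (-(n:ℝ))) (Icc a 1) := by
    intro a ha
    refine ContinuousOn.mul (ContinuousOn.mul ?_ continuousOn_id) ?_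
    · exact ((continuousOn_id.div_const r).rpow_const fun x hx => Or.inr hN0.le).sub
        continuousOn_const
    · exact continuousOn_id.rpow_const fun x hx => Or.inl (ne_of_gt (ha.trans_le hx.1))
  have hicont : ∀ a : ℝ, 0 < a → ContinuousOn (fun ζ : ℝ => ζ⁻¹) (Icc a 1) := fun a ha =>
    continuousOn_inv₀.mono fun x hx => (ne_of_gt (ha.trans_le hx.1) : x ≠ 0)
  have hb1 : (-1:ℝ) < b - 1 := by linarith
  have hf_int : IntervalIntegrable G volume r 1 :=
    my_aux_integrable hr0 hr1 hb1 _ (hcont r hr0)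
  have hg2_int : IntervalIntegrable (fun ζ : ℝ => ζ⁻¹ * (-Real.log ζ) ^ (b - 1)) volume r 1 :=
    my_aux_integrable hr0 hr1 hb1 _ (hicont r hr0)
  -- key pointwise identity
  have hkey : ∀ ζ : ℝ, 0 < ζ → (ζ / r) ^ N * ζ * ζ ^ (-(n:ℝ)) = r ^ (-N) * ζ⁻¹ := by
    intro ζ hζ
    have h1 : ζ ^ N * ζ * ζ ^ (-(n:ℝ)) = ζ⁻¹ := by
      have h2 : ζ ^ N * ζ * ζ ^ (-(n:ℝ)) = ζ ^ (N + 1 + -(n:ℝ)) := by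
        rw [Real.rpow_add hζ, Real.rpow_add hζ, Real.rpow_one]
      rw [h2, show N + 1 + -(n:ℝ) = (-1:ℝ) by rw [hNdef]; ring, Real.rpow_neg_one]
    calc (ζ / r) ^ N * ζ * ζ ^ (-(n:ℝ))
        = (ζ ^ N / r ^ N) * ζ * ζ ^ (-(n:ℝ)) := by rw [Real.div_rpow hζ.le hr0.le]
      _ = (ζ ^ N * ζ * ζ ^ (-(n:ℝ))) / r ^ N := by ring
      _ = ζ⁻¹ / r ^ N := by rw [h1]
      _ = r ^ (-N) * ζ⁻¹ := by rw [Real.rpow_neg hr0.le]; ring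
  -- nonnegativity of the weight
  have hwnn : ∀ ζ : ℝ, 0 < ζ → ζ ≤ 1 → 0 ≤ ζ * (ζ ^ (-(n:ℝ)) * (-Real.log ζ) ^ (b - 1)) := by
    intro ζ hζ hζ1
    have hLnn : 0 ≤ (-Real.log ζ) ^ (b - 1) :=
      Real.rpow_nonneg (neg_nonneg.2 (Real.log_nonpos hζ.le hζ1)) _
    exact mul_nonneg hζ.le (mul_nonneg (Real.rpow_nonneg hζ.le _) hLnn)
  -- upper pointwise bound
  have hup : ∀ ζ ∈ Icc r 1, G ζ ≤ r ^ (-N) * (ζ⁻¹ * (-Real.log ζ) ^ (b - 1)) := by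
    intro ζ hζ
    have hζ0 : 0 < ζ := hr0.trans_le hζ.1
    have hw := hwnn ζ hζ0 hζ.2
    calc G ζ = ((ζ / r) ^ N - 1) * (ζ * (ζ ^ (-(n:ℝ)) * (-Real.log ζ) ^ (b - 1))) := by
          rw [hGdef]; ring
      _ ≤ (ζ / r) ^ N * (ζ * (ζ ^ (-(n:ℝ)) * (-Real.log ζ) ^ (b - 1))) :=
          mul_le_mul_of_nonneg_right (by linarith) hw
      _ = ((ζ / r) ^ N * ζ * ζ ^ (-(n:ℝ))) * (-Real.log ζ) ^ (b - 1) := by ring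
      _ = (r ^ (-N) * ζ⁻¹) * (-Real.log ζ) ^ (b - 1) := by rw [hkey ζ hζ0]
      _ = r ^ (-N) * (ζ⁻¹ * (-Real.log ζ) ^ (b - 1)) := by ring
  have hupper : (∫ ζ in r..1, G ζ) ≤ r ^ (-N) * ((-Real.log r) ^ b / b) := by
    calc (∫ ζ in r..1, G ζ)
        ≤ ∫ ζ in r..1, r ^ (-N) * (ζ⁻¹ * (-Real.log ζ) ^ (b - 1)) :=
          intervalIntegral.integral_mono_on hr1.le hf_int (hg2_int.const_mul _) hup
      _ = r ^ (-N) * ∫ ζ in r..1, ζ⁻¹ * (-Real.log ζ) ^ (b - 1) :=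
          intervalIntegral.integral_const_mul _ _
      _ = r ^ (-N) * ((-Real.log r) ^ b / b) := by rw [my_aux_integral hr0 hr1 hb]
  -- lower bound via [√r, 1]
  set s : ℝ := Real.sqrt r with hsdef
  have hs0 : 0 < s := Real.sqrt_pos.2 hr0
  have hs1 : s < 1 := by
    have := Real.sqrt_lt_sqrt hr0.le hr1
    rwa [Real.sqrt_one] at this
  have hrs : r ≤ s := by
    rw [hsdef, Real.le_sqrt hr0.le hr0.le]
    nlinarith
  have h2s : 2 * r ≤ s := by
    rw [hsdef, Real.le_sqrt (by linarith) hr0.le]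
    nlinarith
  have hlogs : -Real.log s = (-Real.log r) / 2 := by
    rw [hsdef, Real.log_sqrt hr0.le]; ring
  have hsub1 : Set.uIcc s 1 ⊆ Set.uIcc r 1 := by
    rw [Set.uIcc_of_le hr1.le, Set.uIcc_of_le hs1.le]
    exact Icc_subset_Icc hrs le_rfl
  have hsub2 : Set.uIcc r s ⊆ Set.uIcc r 1 := by
    rw [Set.uIcc_of_le hr1.le, Set.uIcc_of_le hrs]
    exact Icc_subset_Icc le_rfl hs1.le
  have hsplit : (∫ ζ in r..1, G ζ) = (∫ ζ in r..s, G ζ) + ∫ ζ in s..1, G ζ :=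
    (intervalIntegral.integral_add_adjacent_intervals (hf_int.mono_set hsub2)
      (hf_int.mono_set hsub1)).symm
  have hfirst : 0 ≤ ∫ ζ in r..s, G ζ := by
    refine intervalIntegral.integral_nonneg hrs fun u hu => ?_
    have hu0 : 0 < u := hr0.trans_le hu.1
    have hu1 : u ≤ 1 := hu.2.trans hs1.le
    have h1u : (1:ℝ) ≤ (u / r) ^ N := by
      calc (1:ℝ) = (1:ℝ) ^ N := (Real.one_rpow N).symm
        _ ≤ (u / r) ^ N := Real.rpow_le_rpow zero_le_one ((one_le_div hr0).2 hu.1) hN0.le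
    have hw := hwnn u hu0 hu1
    have : G u = ((u / r) ^ N - 1) * (u * (u ^ (-(n:ℝ)) * (-Real.log u) ^ (b - 1))) := by
      rw [hGdef]; ring
    rw [this]
    exact mul_nonneg (by linarith) hw
  have hint_low : IntervalIntegrable (fun ζ : ℝ => ζ⁻¹ * (-Real.log ζ) ^ (b - 1)) volume s 1 :=
    my_aux_integrable hs0 hs1 hb1 _ (hicont s hs0)
  have hlow : ∀ ζ ∈ Icc s 1,
      (1/2) * r ^ (-N) * (ζ⁻¹ * (-Real.log ζ) ^ (b - 1)) ≤ G ζ := by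
    intro ζ hζ
    have hζ0 : 0 < ζ := hs0.trans_le hζ.1
    have h2 : (2:ℝ) ≤ ζ / r := by
      rw [le_div_iff₀ hr0]
      have := hζ.1
      nlinarith
    have hN2 : (2:ℝ) ≤ (ζ / r) ^ N := by
      calc (2:ℝ) ≤ ζ / r := h2
        _ = (ζ / r) ^ (1:ℝ) := (Real.rpow_one _).symm
        _ ≤ (ζ / r) ^ N := Real.rpow_le_rpow_of_exponent_le (by linarith) hN1
    have hw := hwnn ζ hζ0 hζ.2
    calc (1/2) * r ^ (-N) * (ζ⁻¹ * (-Real.log ζ) ^ (b - 1))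
        = (1/2) * ((r ^ (-N) * ζ⁻¹) * (-Real.log ζ) ^ (b - 1)) := by ring
      _ = (1/2) * (((ζ / r) ^ N * ζ * ζ ^ (-(n:ℝ))) * (-Real.log ζ) ^ (b - 1)) := by
          rw [hkey ζ hζ0]
      _ = ((1/2) * (ζ / r) ^ N) * (ζ * (ζ ^ (-(n:ℝ)) * (-Real.log ζ) ^ (b - 1))) := by ring
      _ ≤ ((ζ / r) ^ N - 1) * (ζ * (ζ ^ (-(n:ℝ)) * (-Real.log ζ) ^ (b - 1))) :=
          mul_le_mul_of_nonneg_right (by linarith) hw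
      _ = G ζ := by rw [hGdef]; ring
  have hlower : (1/2) * r ^ (-N) * (((-Real.log r) / 2) ^ b / b) ≤ ∫ ζ in s..1, G ζ := by
    calc (1/2) * r ^ (-N) * (((-Real.log r) / 2) ^ b / b)
        = (1/2) * r ^ (-N) * ((-Real.log s) ^ b / b) := by rw [hlogs]
      _ = (1/2) * r ^ (-N) * ∫ ζ in s..1, ζ⁻¹ * (-Real.log ζ) ^ (b - 1) := by
          rw [my_aux_integral hs0 hs1 hb]
      _ = ∫ ζ in s..1, (1/2) * r ^ (-N) * (ζ⁻¹ * (-Real.log ζ) ^ (b - 1)) := by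
          rw [← intervalIntegral.integral_const_mul]
      _ ≤ ∫ ζ in s..1, G ζ :=
          intervalIntegral.integral_mono_on hs1.le
            (hint_low.const_mul _) (hf_int.mono_set hsub1) hlow
  have hIlow : (1/2) * r ^ (-N) * (((-Real.log r) / 2) ^ b / b) ≤ ∫ ζ in r..1, G ζ := by
    rw [hsplit]; linarith
  have hdiv : ((-Real.log r) / 2) ^ b = (-Real.log r) ^ b / (2:ℝ) ^ b :=
    Real.div_rpow hL.le (by norm_num) b
  constructor
  · -- lower bound
    have h1 : (2 * N * b * (2:ℝ) ^ b)⁻¹ * r ^ (-N) * (-Real.log r) ^ b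
        = N⁻¹ * ((1/2) * r ^ (-N) * (((-Real.log r) / 2) ^ b / b)) := by
      rw [hdiv]; field_simp
    rw [h1]
    exact mul_le_mul_of_nonneg_left hIlow (by positivity)
  · -- upper bound
    have h2 : (N * b)⁻¹ * r ^ (-N) * (-Real.log r) ^ b
        = N⁻¹ * (r ^ (-N) * ((-Real.log r) ^ b / b)) := by
      field_simp
    rw [h2]
    exact mul_le_mul_of_nonneg_left hupper (by positivity)
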